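/- Let (Δ, γ) be a voltage graph with voltages in a group G such that the derived graph Γ = Δ ×_γ G is connected, let φ : Γ → Δ be the canonical covering, let v₀ be a base vertex of Γ with φ(v₀) = v_Δ, and let μ : Δ_⊤ → Δ be a covering with Δ_⊤ connected and v_⊤ a vertex of Δ_⊤ with μ(v_⊤) = v_Δ. Define ν : Γ → Δ_⊤ by path lifting: for each vertex v of Γ, choose a path p in Γ from v₀ to v and let ν(v) be the terminal vertex of the unique lift under μ of the walk φ(p) starting at v_⊤ (and define ν on edges analogously). Then ν is well-defined and is a covering satisfying μ∘ν = φ if and only if μ is a good covering of (Δ, γ). -/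

import Mathlib

namespace VG

/-- A graph (directed multigraph): vertices, edges, initial and terminal endpoint maps. -/
structure MGraph : Type 1 where
  V : Type
  E : Type
  ι : E → V
  τ : E → V

/-- A homomorphism of graphs. -/
structure Hom (Γ Δ : MGraph) where
  onV : Γ.V → Δ.V
  onE : Γ.E → Δ.E
  map_ι : ∀ e, Δ.ι (onE e) = onV (Γ.ι e)
  map_τ : ∀ e, Δ.τ (onE e) = onV (Γ.τ e)

/-- Composition of homomorphisms. -/
def Hom.comp {Γ₁ Γ₂ Γ₃ : MGraph} (g : Hom Γ₂ Γ₃) (f : Hom Γ₁ Γ₂) : Hom Γ₁ Γ₃ where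
  onV := g.onV ∘ f.onV
  onE := g.onE ∘ f.onE
  map_ι e := by simp only [Function.comp_apply]; rw [g.map_ι, f.map_ι]
  map_τ e := by simp only [Function.comp_apply]; rw [g.map_τ, f.map_τ]

/-- An isomorphism of graphs: a homomorphism bijective on vertices and on edges. -/
structure Iso (Γ Δ : MGraph) where
  onV : Γ.V ≃ Δ.V
  onE : Γ.E ≃ Δ.E
  map_ι : ∀ e, Δ.ι (onE e) = onV (Γ.ι e)
  map_τ : ∀ e, Δ.τ (onE e) = onV (Γ.τ e)

def Iso.toHom {Γ Δ : MGraph} (f : Iso Γ Δ) : Hom Γ Δ :=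
  ⟨f.onV, f.onE, f.map_ι, f.map_τ⟩

/-- The automorphisms of a graph. -/
abbrev Aut (Γ : MGraph) := Iso Γ Γ

theorem Iso.ext' {Γ Δ : MGraph} {f g : Iso Γ Δ} (hV : f.onV = g.onV) (hE : f.onE = g.onE) :
    f = g := by
  cases f; cases g; cases hV; cases hE; rfl

instance (Γ : MGraph) : Group (Aut Γ) where
  one := ⟨Equiv.refl _, Equiv.refl _, fun _ => rfl, fun _ => rfl⟩
  mul g h := ⟨h.onV.trans g.onV, h.onE.trans g.onE,
    fun e => by simp only [Equiv.trans_apply]; rw [g.map_ι, h.map_ι],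
    fun e => by simp only [Equiv.trans_apply]; rw [g.map_τ, h.map_τ]⟩
  inv g := ⟨g.onV.symm, g.onE.symm,
    fun e => by
      have h := g.map_ι (g.onE.symm e)
      rw [Equiv.apply_symm_apply] at h
      rw [h, Equiv.symm_apply_apply],
    fun e => by
      have h := g.map_τ (g.onE.symm e)
      rw [Equiv.apply_symm_apply] at h
      rw [h, Equiv.symm_apply_apply]⟩
  mul_assoc a b c := Iso.ext' (Equiv.ext fun _ => rfl) (Equiv.ext fun _ => rfl)
  one_mul a := Iso.ext' (Equiv.ext fun _ => rfl) (Equiv.ext fun _ => rfl)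
  mul_one a := Iso.ext' (Equiv.ext fun _ => rfl) (Equiv.ext fun _ => rfl)
  inv_mul_cancel a :=
    Iso.ext' (Equiv.ext fun x => a.onV.symm_apply_apply x)
      (Equiv.ext fun x => a.onE.symm_apply_apply x)

theorem Aut.mul_onV {Γ : MGraph} (g h : Aut Γ) (v : Γ.V) : (g * h).onV v = g.onV (h.onV v) := rfl
theorem Aut.mul_onE {Γ : MGraph} (g h : Aut Γ) (e : Γ.E) : (g * h).onE e = g.onE (h.onE e) := rfl
theorem Aut.one_onV {Γ : MGraph} (v : Γ.V) : (1 : Aut Γ).onV v = v := rfl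
theorem Aut.inv_onV {Γ : MGraph} (g : Aut Γ) (v : Γ.V) : g⁻¹.onV v = g.onV.symm v := rfl

/-- The outset of a vertex. -/
def Out (Γ : MGraph) (v : Γ.V) : Set Γ.E := {e | Γ.ι e = v}

/-- The inset of a vertex. -/
def In (Γ : MGraph) (v : Γ.V) : Set Γ.E := {e | Γ.τ e = v}

/-- A covering: a surjective homomorphism restricting to bijections on out-sets and in-sets. -/
structure IsCovering {Γ Δ : MGraph} (φ : Hom Γ Δ) : Prop where
  surjV : Function.Surjective φ.onV
  surjE : Function.Surjective φ.onE
  bijOut : ∀ v : Γ.V, Set.BijOn φ.onE (Out Γ v) (Out Δ (φ.onV v))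
  bijIn : ∀ v : Γ.V, Set.BijOn φ.onE (In Γ v) (In Δ (φ.onV v))

/-- The cover group of a covering: automorphisms `g` of `Γ` with `φ ∘ g = φ`. -/
def coverGroup {Γ Δ : MGraph} (φ : Hom Γ Δ) : Subgroup (Aut Γ) where
  carrier := {g | (∀ v, φ.onV (g.onV v) = φ.onV v) ∧ (∀ e, φ.onE (g.onE e) = φ.onE e)}
  one_mem' := ⟨fun _ => rfl, fun _ => rfl⟩
  mul_mem' := by
    rintro g h ⟨hgV, hgE⟩ ⟨hhV, hhE⟩
    exact ⟨fun v => by rw [Aut.mul_onV, hgV, hhV], fun e => by rw [Aut.mul_onE, hgE, hhE]⟩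
  inv_mem' := by
    rintro g ⟨hgV, hgE⟩
    refine ⟨fun v => ?_, fun e => ?_⟩
    · have h := hgV (g.onV.symm v)
      rw [Equiv.apply_symm_apply] at h
      exact h.symm
    · have h := hgE (g.onE.symm e)
      rw [Equiv.apply_symm_apply] at h
      exact h.symm

theorem mem_coverGroup {Γ Δ : MGraph} {φ : Hom Γ Δ} {g : Aut Γ} :
    g ∈ coverGroup φ ↔ (∀ v, φ.onV (g.onV v) = φ.onV v) ∧ (∀ e, φ.onE (g.onE e) = φ.onE e) :=
  Iff.rfl

/-- A covering is regular if its cover group acts transitively on all fibers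
(of vertices and of edges). -/
def IsRegular {Γ Δ : MGraph} (φ : Hom Γ Δ) : Prop :=
  (∀ v w : Γ.V, φ.onV v = φ.onV w → ∃ g ∈ coverGroup φ, g.onV v = w) ∧
  (∀ e f : Γ.E, φ.onE e = φ.onE f → ∃ g ∈ coverGroup φ, g.onE e = f)

/-- The orbit equivalence on vertices induced by a subgroup of automorphisms. -/
def vSetoid (Γ : MGraph) (G : Subgroup (Aut Γ)) : Setoid Γ.V where
  r v w := ∃ g ∈ G, g.onV v = w
  iseqv := by
    refine ⟨fun v => ⟨1, one_mem _, rfl⟩, ?_, ?_⟩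
    · rintro v w ⟨g, hg, rfl⟩
      exact ⟨g⁻¹, inv_mem hg, g.onV.symm_apply_apply v⟩
    · rintro u v w ⟨g, hg, rfl⟩ ⟨h, hh, rfl⟩
      exact ⟨h * g, mul_mem hh hg, rfl⟩

/-- The orbit equivalence on edges induced by a subgroup of automorphisms. -/
def eSetoid (Γ : MGraph) (G : Subgroup (Aut Γ)) : Setoid Γ.E where
  r e f := ∃ g ∈ G, g.onE e = f
  iseqv := by
    refine ⟨fun e => ⟨1, one_mem _, rfl⟩, ?_, ?_⟩
    · rintro e f ⟨g, hg, rfl⟩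
      exact ⟨g⁻¹, inv_mem hg, g.onE.symm_apply_apply e⟩
    · rintro e f d ⟨g, hg, rfl⟩ ⟨h, hh, rfl⟩
      exact ⟨h * g, mul_mem hh hg, rfl⟩

/-- The quotient graph of `Γ` by a subgroup `G` of automorphisms. -/
def quotientGraph (Γ : MGraph) (G : Subgroup (Aut Γ)) : MGraph where
  V := Quotient (vSetoid Γ G)
  E := Quotient (eSetoid Γ G)
  ι := Quotient.map' Γ.ι (by rintro e f ⟨g, hg, rfl⟩; exact ⟨g, hg, (g.map_ι e).symm⟩)
  τ := Quotient.map' Γ.τ (by rintro e f ⟨g, hg, rfl⟩; exact ⟨g, hg, (g.map_τ e).symm⟩)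

/-- The canonical projection of a graph onto its quotient by a subgroup of automorphisms. -/
def quotientProj (Γ : MGraph) (G : Subgroup (Aut Γ)) : Hom Γ (quotientGraph Γ G) where
  onV := Quotient.mk (vSetoid Γ G)
  onE := Quotient.mk (eSetoid Γ G)
  map_ι e := rfl
  map_τ e := rfl

/-- A subgroup of automorphisms acts freely: nonidentity elements move every vertex. -/
def ActsFreely (Γ : MGraph) (G : Subgroup (Aut Γ)) : Prop :=
  ∀ g ∈ G, g ≠ 1 → ∀ v : Γ.V, g.onV v ≠ v

/-! ### Walks -/

/-- The vertex from which a step (edge together with a direction of traversal) departs. -/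
def stepSrc (Γ : MGraph) (s : Γ.E × Bool) : Γ.V := cond s.2 (Γ.ι s.1) (Γ.τ s.1)

/-- The vertex at which a step arrives. -/
def stepTgt (Γ : MGraph) (s : Γ.E × Bool) : Γ.V := cond s.2 (Γ.τ s.1) (Γ.ι s.1)

/-- A list of steps forms a chain starting at a given vertex. -/
def chain (Γ : MGraph) : Γ.V → List (Γ.E × Bool) → Prop
  | _, [] => True
  | v, s :: rest => stepSrc Γ s = v ∧ chain Γ (stepTgt Γ s) rest

/-- The final vertex after traversing a list of steps from a given vertex. -/
def endOf (Γ : MGraph) : Γ.V → List (Γ.E × Bool) → Γ.V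
  | v, [] => v
  | _, s :: rest => endOf Γ (stepTgt Γ s) rest

/-- A walk: an initial vertex and a compatible list of steps, each traversing an
edge either along (`true`) or against (`false`) its orientation. -/
structure Walk (Γ : MGraph) where
  first : Γ.V
  steps : List (Γ.E × Bool)
  ok : chain Γ first steps

/-- The terminal vertex of a walk. -/
def Walk.last {Γ : MGraph} (w : Walk Γ) : Γ.V := endOf Γ w.first w.steps

/-- Two vertices joined by a walk. -/
def Reachable (Γ : MGraph) (u v : Γ.V) : Prop :=
  ∃ w : Walk Γ, w.first = u ∧ w.last = v

/-- A graph is connected if any two vertices are joined by a walk. -/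
def Connected (Γ : MGraph) : Prop :=
  ∀ u v : Γ.V, Reachable Γ u v

def Hom.mapStep {Γ Δ : MGraph} (φ : Hom Γ Δ) (s : Γ.E × Bool) : Δ.E × Bool := (φ.onE s.1, s.2)

theorem Hom.stepSrc_map {Γ Δ : MGraph} (φ : Hom Γ Δ) (s : Γ.E × Bool) :
    stepSrc Δ (φ.mapStep s) = φ.onV (stepSrc Γ s) := by
  obtain ⟨e, b⟩ := s
  cases b <;> simp [stepSrc, Hom.mapStep, φ.map_ι, φ.map_τ]

theorem Hom.stepTgt_map {Γ Δ : MGraph} (φ : Hom Γ Δ) (s : Γ.E × Bool) :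
    stepTgt Δ (φ.mapStep s) = φ.onV (stepTgt Γ s) := by
  obtain ⟨e, b⟩ := s
  cases b <;> simp [stepTgt, Hom.mapStep, φ.map_ι, φ.map_τ]

theorem Hom.chain_map {Γ Δ : MGraph} (φ : Hom Γ Δ) (l : List (Γ.E × Bool)) (v : Γ.V)
    (h : chain Γ v l) : chain Δ (φ.onV v) (l.map φ.mapStep) := by
  induction l generalizing v with
  | nil => trivial
  | cons s rest ih =>
    exact ⟨by rw [φ.stepSrc_map, h.1], by rw [φ.stepTgt_map]; exact ih _ h.2⟩

/-- The image of a walk under a homomorphism (edge-by-edge, preserving directions). -/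
def Walk.map {Γ Δ : MGraph} (φ : Hom Γ Δ) (w : Walk Γ) : Walk Δ :=
  ⟨φ.onV w.first, w.steps.map φ.mapStep, φ.chain_map w.steps w.first w.ok⟩

theorem endOf_map {Γ Δ : MGraph} (φ : Hom Γ Δ) (l : List (Γ.E × Bool)) (v : Γ.V) :
    endOf Δ (φ.onV v) (l.map φ.mapStep) = φ.onV (endOf Γ v l) := by
  induction l generalizing v with
  | nil => rfl
  | cons s rest ih =>
    show endOf Δ (stepTgt Δ (φ.mapStep s)) (rest.map φ.mapStep) = _
    rw [φ.stepTgt_map]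
    exact ih _

theorem chain_append (Γ : MGraph) (l₁ l₂ : List (Γ.E × Bool)) (v : Γ.V)
    (h₁ : chain Γ v l₁) (h₂ : chain Γ (endOf Γ v l₁) l₂) : chain Γ v (l₁ ++ l₂) := by
  induction l₁ generalizing v with
  | nil => exact h₂
  | cons s rest ih => exact ⟨h₁.1, ih _ h₁.2 h₂⟩

theorem endOf_append (Γ : MGraph) (l₁ l₂ : List (Γ.E × Bool)) (v : Γ.V) :
    endOf Γ v (l₁ ++ l₂) = endOf Γ (endOf Γ v l₁) l₂ := by
  induction l₁ generalizing v with
  | nil => rfl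
  | cons s rest ih => exact ih _

/-- Concatenation of walks. -/
def Walk.append {Γ : MGraph} (w₁ w₂ : Walk Γ) (h : w₁.last = w₂.first) : Walk Γ :=
  ⟨w₁.first, w₁.steps ++ w₂.steps, chain_append Γ _ _ _ w₁.ok (by rw [show endOf Γ w₁.first w₁.steps = w₂.first from h]; exact w₂.ok)⟩

theorem Walk.append_last {Γ : MGraph} (w₁ w₂ : Walk Γ) (h : w₁.last = w₂.first) :
    (w₁.append w₂ h).last = w₂.last := by
  show endOf Γ w₁.first (w₁.steps ++ w₂.steps) = _
  rw [endOf_append, show endOf Γ w₁.first w₁.steps = w₂.first from h]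
  rfl

theorem Reachable.trans {Γ : MGraph} {u v w : Γ.V}
    (h₁ : Reachable Γ u v) (h₂ : Reachable Γ v w) : Reachable Γ u w := by
  obtain ⟨p, hp1, hp2⟩ := h₁
  obtain ⟨q, hq1, hq2⟩ := h₂
  exact ⟨p.append q (by rw [hp2, hq1]), hp1, by rw [Walk.append_last]; exact hq2⟩

/-- A single forward step along an edge, as a walk. -/
def Walk.single {Γ : MGraph} (e : Γ.E) : Walk Γ :=
  ⟨Γ.ι e, [(e, true)], ⟨rfl, trivial⟩⟩

def flipStep {Γ : MGraph} (s : Γ.E × Bool) : Γ.E × Bool := (s.1, !s.2)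

theorem stepSrc_flip (Γ : MGraph) (s : Γ.E × Bool) : stepSrc Γ (flipStep s) = stepTgt Γ s := by
  obtain ⟨e, b⟩ := s; cases b <;> rfl

theorem stepTgt_flip (Γ : MGraph) (s : Γ.E × Bool) : stepTgt Γ (flipStep s) = stepSrc Γ s := by
  obtain ⟨e, b⟩ := s; cases b <;> rfl

theorem endOf_reverse (Γ : MGraph) (l : List (Γ.E × Bool)) (v : Γ.V) (h : chain Γ v l) :
    endOf Γ (endOf Γ v l) (l.reverse.map flipStep) = v := by
  induction l generalizing v with
  | nil => rfl
  | cons s rest ih =>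
    rw [List.reverse_cons, List.map_append]
    show endOf Γ (endOf Γ (stepTgt Γ s) rest) ((rest.reverse.map flipStep) ++ [flipStep s]) = v
    rw [endOf_append, ih _ h.2]
    show stepTgt Γ (flipStep s) = v
    rw [stepTgt_flip]; exact h.1

theorem chain_reverse (Γ : MGraph) (l : List (Γ.E × Bool)) (v : Γ.V) (h : chain Γ v l) :
    chain Γ (endOf Γ v l) (l.reverse.map flipStep) := by
  induction l generalizing v with
  | nil => trivial
  | cons s rest ih =>
    rw [List.reverse_cons, List.map_append]
    show chain Γ (endOf Γ (stepTgt Γ s) rest) _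
    refine chain_append Γ _ _ _ (ih _ h.2) ?_
    rw [endOf_reverse Γ rest _ h.2]
    exact ⟨by rw [stepSrc_flip], trivial⟩

/-- The reversal of a walk. -/
def Walk.reverse {Γ : MGraph} (w : Walk Γ) : Walk Γ :=
  ⟨w.last, w.steps.reverse.map flipStep, chain_reverse Γ w.steps w.first w.ok⟩

theorem Walk.reverse_last {Γ : MGraph} (w : Walk Γ) : w.reverse.last = w.first :=
  endOf_reverse Γ w.steps w.first w.ok

theorem Reachable.refl' (Γ : MGraph) (v : Γ.V) : Reachable Γ v v :=
  ⟨⟨v, [], trivial⟩, rfl, rfl⟩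

theorem Reachable.symm' {Γ : MGraph} {u v : Γ.V} (h : Reachable Γ u v) : Reachable Γ v u := by
  obtain ⟨p, h1, h2⟩ := h
  exact ⟨p.reverse, by rw [show p.reverse.first = p.last from rfl, h2],
    by rw [p.reverse_last, h1]⟩

/-- The connected-component equivalence on vertices. -/
def reachSetoid (Γ : MGraph) : Setoid Γ.V where
  r := Reachable Γ
  iseqv := ⟨Reachable.refl' Γ, Reachable.symm', Reachable.trans⟩

/-! ### Subgraphs, trees, lifts -/

/-- A subgraph of a graph. -/
structure Subgraph (Γ : MGraph) where
  verts : Set Γ.V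
  edges : Set Γ.E
  ι_mem : ∀ e ∈ edges, Γ.ι e ∈ verts
  τ_mem : ∀ e ∈ edges, Γ.τ e ∈ verts

/-- The graph determined by a subgraph. -/
def Subgraph.toMGraph {Γ : MGraph} (H : Subgraph Γ) : MGraph where
  V := ↥H.verts
  E := ↥H.edges
  ι e := ⟨Γ.ι e.1, H.ι_mem e.1 e.2⟩
  τ e := ⟨Γ.τ e.1, H.τ_mem e.1 e.2⟩

/-- The inclusion homomorphism of a subgraph. -/
def Subgraph.incl {Γ : MGraph} (H : Subgraph Γ) : Hom H.toMGraph Γ :=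
  ⟨fun v => v.1, fun e => e.1, fun _ => rfl, fun _ => rfl⟩

/-- The set of endpoints of a set of edges. -/
def endpoints (Γ : MGraph) (S : Set Γ.E) : Set Γ.V := {v | ∃ e ∈ S, Γ.ι e = v ∨ Γ.τ e = v}

/-- The subgraph induced by a set of edges. -/
def edgeInduced (Γ : MGraph) (S : Set Γ.E) : Subgraph Γ where
  verts := endpoints Γ S
  edges := S
  ι_mem e he := ⟨e, he, Or.inl rfl⟩
  τ_mem e he := ⟨e, he, Or.inr rfl⟩

/-- The list of vertices visited when traversing a list of steps from a vertex. -/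
def vertsOf (Γ : MGraph) : Γ.V → List (Γ.E × Bool) → List Γ.V
  | v, [] => [v]
  | v, s :: rest => v :: vertsOf Γ (stepTgt Γ s) rest

/-- A path: a walk with no repeated edge and no repeated vertex
(except possibly the initial and terminal vertex coinciding). -/
def Walk.IsPath {Γ : MGraph} (w : Walk Γ) : Prop :=
  (w.steps.map Prod.fst).Nodup ∧
  (vertsOf Γ w.first w.steps).dropLast.Nodup ∧
  (vertsOf Γ w.first w.steps).tail.Nodup

/-- A cyclic walk: terminal vertex equals initial vertex. -/
def Walk.IsCyclic {Γ : MGraph} (w : Walk Γ) : Prop := w.last = w.first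

/-- A graph is acyclic if it has no nontrivial cyclic path. -/
def Acyclic (Γ : MGraph) : Prop :=
  ¬ ∃ w : Walk Γ, w.steps ≠ [] ∧ w.IsCyclic ∧ w.IsPath

/-- A spanning tree set: an edge set inducing an acyclic connected subgraph
containing all vertices. -/
def IsSpanningTreeSet (Δ : MGraph) (S : Set Δ.E) : Prop :=
  Acyclic (edgeInduced Δ S).toMGraph ∧ Connected (edgeInduced Δ S).toMGraph ∧
  ∀ v : Δ.V, v ∈ endpoints Δ S

/-- A lift of `Δ` with respect to a covering `φ : Γ → Δ`: a connected subgraph of `Γ`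
on whose edges `φ` restricts to a bijection onto the edges of `Δ`. -/
def IsLift {Γ Δ : MGraph} (φ : Hom Γ Δ) (Λ : Subgraph Γ) : Prop :=
  Connected Λ.toMGraph ∧ Set.BijOn φ.onE Λ.edges Set.univ

/-- A proper lift, with designated edge set `S₀` lifting a spanning tree set of `Δ`:
every edge of the lift has its initial endpoint among the endpoints of `S₀`
(the interior vertices). -/
def IsProperLiftWith {Γ Δ : MGraph} (φ : Hom Γ Δ) (Λ : Subgraph Γ) (S₀ : Set Γ.E) : Prop :=
  IsLift φ Λ ∧ S₀ ⊆ Λ.edges ∧ IsSpanningTreeSet Δ (φ.onE '' S₀) ∧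
  ∀ e ∈ Λ.edges, Γ.ι e ∈ endpoints Γ S₀

/-- A proper lift. -/
def IsProperLift {Γ Δ : MGraph} (φ : Hom Γ Δ) (Λ : Subgraph Γ) : Prop :=
  ∃ S₀ : Set Γ.E, IsProperLiftWith φ Λ S₀

/-! ### Voltage graphs -/

/-- The voltage of a walk: the ordered product of the voltages of its edges,
inverted when an edge is traversed against its orientation. -/
def voltage {Δ : MGraph} {G : Type} [Group G] (γ : Δ.E → G) (w : Walk Δ) : G :=
  (w.steps.map fun s => cond s.2 (γ s.1) (γ s.1)⁻¹).prod

/-- The derived graph of a voltage graph `(Δ, γ)`. -/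
def derivedGraph (Δ : MGraph) {G : Type} [Group G] (γ : Δ.E → G) : MGraph where
  V := Δ.V × G
  E := Δ.E × G
  ι e := (Δ.ι e.1, e.2)
  τ e := (Δ.τ e.1, e.2 * γ e.1)

/-- The canonical covering of a derived graph onto its base. -/
def derivedProj (Δ : MGraph) {G : Type} [Group G] (γ : Δ.E → G) : Hom (derivedGraph Δ γ) Δ :=
  ⟨Prod.fst, Prod.fst, fun _ => rfl, fun _ => rfl⟩

/-- Restriction of a voltage assignment to the subgroup generated by its values. -/
def restrictToClosure {G : Type} [Group G] {α : Type} (γ : α → G) :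
    α → Subgroup.closure (Set.range γ) :=
  fun a => ⟨γ a, Subgroup.subset_closure (Set.mem_range_self a)⟩

/-- The connected component of a vertex, as a subgraph. -/
def componentOf (Γ : MGraph) (v : Γ.V) : Subgraph Γ where
  verts := {u | Reachable Γ v u}
  edges := {e | Reachable Γ v (Γ.ι e)}
  ι_mem e he := he
  τ_mem e he := Reachable.trans he ⟨Walk.single e, rfl, rfl⟩

/-- `γ'` is the condensation of `γ` with respect to the spanning tree set `S` and the base
vertex `v₀`: edges of `S` get the identity, and an edge `e ∉ S` gets the voltage of the
return walk of `e` from `v₀` via `S`. -/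
def IsCondensation {Δ : MGraph} {G : Type} [Group G] (γ : Δ.E → G) (S : Set Δ.E)
    (v₀ : Δ.V) (γ' : Δ.E → G) : Prop :=
  (∀ e ∈ S, γ' e = 1) ∧
  ∀ e ∉ S, ∃ p₁ p₂ : Walk Δ,
    p₁.first = v₀ ∧ p₁.last = Δ.ι e ∧ p₂.first = Δ.τ e ∧ p₂.last = v₀ ∧
    p₁.IsPath ∧ p₂.IsPath ∧
    (∀ s ∈ p₁.steps, s.1 ∈ S) ∧ (∀ s ∈ p₂.steps, s.1 ∈ S) ∧
    γ' e = voltage γ p₁ * γ e * voltage γ p₂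

/-- `γ` is the voltage assignment on `Δ` with respect to the proper lift `Λ` (with interior
determined by `S₀`): interior edges of the lift give voltage `1`, and a boundary edge with
terminal endpoint in `g · V_Λ⁰` gives voltage `g`. -/
def IsVoltageWrt {Γ Δ : MGraph} (φ : Hom Γ Δ) (Λ : Subgraph Γ) (S₀ : Set Γ.E)
    (γ : Δ.E → Aut Γ) : Prop :=
  (∀ eΔ : Δ.E, γ eΔ ∈ coverGroup φ) ∧
  ∀ e ∈ Λ.edges,
    (Γ.τ e ∈ endpoints Γ S₀ → γ (φ.onE e) = 1) ∧
    (Γ.τ e ∉ endpoints Γ S₀ → Γ.τ e ∈ (γ (φ.onE e)).onV '' endpoints Γ S₀)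

/-- A good covering of a voltage graph: every cyclic walk of trivial voltage lifts
only to cyclic walks. -/
def IsGoodCovering {Δ Δtop : MGraph} {G : Type} [Group G] (γ : Δ.E → G)
    (μ : Hom Δtop Δ) : Prop :=
  ∀ p : Walk Δ, p.IsCyclic → voltage γ p = 1 →
    ∀ q : Walk Δtop, Walk.map μ q = p → q.IsCyclic

/-! ### Product graphs and common covers -/

/-- The product of two graphs. -/
def prodGraph (Δ₁ Δ₂ : MGraph) : MGraph where
  V := Δ₁.V × Δ₂.V
  E := Δ₁.E × Δ₂.E
  ι e := (Δ₁.ι e.1, Δ₂.ι e.2)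
  τ e := (Δ₁.τ e.1, Δ₂.τ e.2)

/-- First coordinate projection from a subgraph of a product graph. -/
def sgProj₁ {Δ₁ Δ₂ : MGraph} (H : Subgraph (prodGraph Δ₁ Δ₂)) : Hom H.toMGraph Δ₁ where
  onV v := (v.1 : Δ₁.V × Δ₂.V).1
  onE e := (e.1 : Δ₁.E × Δ₂.E).1
  map_ι e := rfl
  map_τ e := rfl

/-- Second coordinate projection from a subgraph of a product graph. -/
def sgProj₂ {Δ₁ Δ₂ : MGraph} (H : Subgraph (prodGraph Δ₁ Δ₂)) : Hom H.toMGraph Δ₂ where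
  onV v := (v.1 : Δ₁.V × Δ₂.V).2
  onE e := (e.1 : Δ₁.E × Δ₂.E).2
  map_ι e := rfl
  map_τ e := rfl

/-- A good common cover of two voltage graphs: a connected subgraph of the product graph
whose coordinate projections are coverings, each a good covering of the respective
voltage graph. -/
def IsGoodCommonCover {Δ₁ Δ₂ : MGraph} {K₁ K₂ : Type} [Group K₁] [Group K₂]
    (γ₁ : Δ₁.E → K₁) (γ₂ : Δ₂.E → K₂) (H : Subgraph (prodGraph Δ₁ Δ₂)) : Prop :=
  Connected H.toMGraph ∧
  IsCovering (sgProj₁ H) ∧ IsCovering (sgProj₂ H) ∧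
  IsGoodCovering γ₁ (sgProj₁ H) ∧ IsGoodCovering γ₂ (sgProj₂ H)

/-- A successful good common cover: both projections are regular, and there is an
automorphism `α` of the cover fixing a spanning tree set `S_⊤` such that the
correspondence between the condensed lifted voltages (via `α`) extends to a group
isomorphism of the generated voltage groups. -/
def IsSuccessfulGoodCommonCover {Δ₁ Δ₂ : MGraph} {K₁ K₂ : Type} [Group K₁] [Group K₂]
    (γ₁ : Δ₁.E → K₁) (γ₂ : Δ₂.E → K₂) (H : Subgraph (prodGraph Δ₁ Δ₂)) : Prop :=
  IsGoodCommonCover γ₁ γ₂ H ∧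
  IsRegular (sgProj₁ H) ∧ IsRegular (sgProj₂ H) ∧
  ∃ (Stop : Set H.toMGraph.E) (vtop : H.toMGraph.V)
    (γ₁' : H.toMGraph.E → K₁) (γ₂' : H.toMGraph.E → K₂) (α : Aut H.toMGraph),
    IsSpanningTreeSet H.toMGraph Stop ∧
    IsCondensation (fun e => γ₁ ((sgProj₁ H).onE e)) Stop vtop γ₁' ∧
    IsCondensation (fun e => γ₂ ((sgProj₂ H).onE e)) Stop vtop γ₂' ∧
    (∀ e ∈ Stop, α.onE e = e) ∧
    ∃ F : ↥(Subgroup.closure (Set.range γ₁')) ≃* ↥(Subgroup.closure (Set.range γ₂')),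
      ∀ e : H.toMGraph.E, (F (restrictToClosure γ₁' e) : K₂) = γ₂' (α.onE e)

/-- A good common cover with regular projections fails if it is not successful. -/
def FailsAsCommonCover {Δ₁ Δ₂ : MGraph} {K₁ K₂ : Type} [Group K₁] [Group K₂]
    (γ₁ : Δ₁.E → K₁) (γ₂ : Δ₂.E → K₂) (H : Subgraph (prodGraph Δ₁ Δ₂)) : Prop :=
  IsGoodCommonCover γ₁ γ₂ H ∧
  IsRegular (sgProj₁ H) ∧ IsRegular (sgProj₂ H) ∧
  ¬ IsSuccessfulGoodCommonCover γ₁ γ₂ H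


/-! ### Auxiliary lemmas for Statement 12 -/

theorem Hom.ext'' {Γ Δ : MGraph} {f g : Hom Γ Δ} (hV : f.onV = g.onV) (hE : f.onE = g.onE) :
    f = g := by cases f; cases g; cases hV; cases hE; rfl

theorem Walk.ext'' {Γ : MGraph} {w₁ w₂ : Walk Γ} (h1 : w₁.first = w₂.first)
    (h2 : w₁.steps = w₂.steps) : w₁ = w₂ := by
  cases w₁; cases w₂; cases h1; cases h2; rfl

theorem step_lift_unique {Γ Δ : MGraph} {μ : Hom Γ Δ} (hμ : IsCovering μ) {v : Γ.V}
    {t₁ t₂ : Γ.E × Bool} (h₁ : stepSrc Γ t₁ = v) (h₂ : stepSrc Γ t₂ = v)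
    (h : μ.mapStep t₁ = μ.mapStep t₂) : t₁ = t₂ := by
  obtain ⟨e₁, b₁⟩ := t₁; obtain ⟨e₂, b₂⟩ := t₂
  simp only [Hom.mapStep, Prod.mk.injEq] at h
  obtain ⟨he, hb⟩ := h
  subst hb
  cases b₁ with
  | true =>
    have m₁ : e₁ ∈ Out Γ v := h₁
    have m₂ : e₂ ∈ Out Γ v := h₂
    rw [(hμ.bijOut v).injOn m₁ m₂ he]
  | false =>
    have m₁ : e₁ ∈ In Γ v := h₁
    have m₂ : e₂ ∈ In Γ v := h₂
    rw [(hμ.bijIn v).injOn m₁ m₂ he]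

theorem step_lift_exists {Γ Δ : MGraph} {μ : Hom Γ Δ} (hμ : IsCovering μ) (v : Γ.V)
    (s : Δ.E × Bool) (hs : stepSrc Δ s = μ.onV v) :
    ∃ t : Γ.E × Bool, stepSrc Γ t = v ∧ μ.mapStep t = s := by
  obtain ⟨e, b⟩ := s
  cases b with
  | true =>
    have he : e ∈ Out Δ (μ.onV v) := hs
    obtain ⟨e', he', heq⟩ := (hμ.bijOut v).surjOn he
    exact ⟨(e', true), he', by simp [Hom.mapStep, heq]⟩
  | false =>
    have he : e ∈ In Δ (μ.onV v) := hs
    obtain ⟨e', he', heq⟩ := (hμ.bijIn v).surjOn he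
    exact ⟨(e', false), he', by simp [Hom.mapStep, heq]⟩

theorem list_lift_exists {Γ Δ : MGraph} {μ : Hom Γ Δ} (hμ : IsCovering μ) :
    ∀ (l : List (Δ.E × Bool)) (v : Γ.V), chain Δ (μ.onV v) l →
    ∃ m : List (Γ.E × Bool), chain Γ v m ∧ m.map μ.mapStep = l := by
  intro l
  induction l with
  | nil => exact fun v _ => ⟨[], trivial, rfl⟩
  | cons s rest ih =>
    intro v hc
    obtain ⟨t, ht1, ht2⟩ := step_lift_exists hμ v s hc.1
    have hrest : chain Δ (μ.onV (stepTgt Γ t)) rest := by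
      rw [← μ.stepTgt_map t, ht2]; exact hc.2
    obtain ⟨m, hm1, hm2⟩ := ih (stepTgt Γ t) hrest
    exact ⟨t :: m, ⟨ht1, hm1⟩, by simp [ht2, hm2]⟩

theorem list_lift_unique {Γ Δ : MGraph} {μ : Hom Γ Δ} (hμ : IsCovering μ) :
    ∀ (m₁ m₂ : List (Γ.E × Bool)) (v : Γ.V), chain Γ v m₁ → chain Γ v m₂ →
    m₁.map μ.mapStep = m₂.map μ.mapStep → m₁ = m₂ := by
  intro m₁
  induction m₁ with
  | nil =>
    intro m₂ v _ _ h
    cases m₂ with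
    | nil => rfl
    | cons s rest => simp at h
  | cons t rest ih =>
    intro m₂ v hc₁ hc₂ h
    cases m₂ with
    | nil => simp at h
    | cons t' rest' =>
      simp only [List.map_cons, List.cons.injEq] at h
      have ht : t = t' := step_lift_unique hμ hc₁.1 hc₂.1 h.1
      subst ht
      rw [ih rest' (stepTgt Γ t) hc₁.2 hc₂.2 h.2]

theorem derivedProj_isCovering (Δ : MGraph) {G : Type} [Group G] (γ : Δ.E → G) :
    IsCovering (derivedProj Δ γ) := by
  constructor
  · exact fun v => ⟨(v, 1), rfl⟩
  · exact fun e => ⟨(e, 1), rfl⟩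
  · intro v
    refine ⟨?_, ?_, ?_⟩
    · rintro ⟨e, g⟩ he
      exact congrArg Prod.fst he
    · rintro ⟨e₁, g₁⟩ h₁ ⟨e₂, g₂⟩ h₂ he
      have hg₁ : g₁ = v.2 := congrArg Prod.snd h₁
      have hg₂ : g₂ = v.2 := congrArg Prod.snd h₂
      simp only [derivedProj] at he
      simp [he, hg₁, hg₂]; rfl
    · intro e he
      refine ⟨(e, v.2), ?_, rfl⟩
      show ((derivedGraph Δ γ).ι (e, v.2)) = v
      show (Δ.ι e, v.2) = v
      rw [show Δ.ι e = v.1 from he]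
      exact Prod.mk.eta
  · intro v
    refine ⟨?_, ?_, ?_⟩
    · rintro ⟨e, g⟩ he
      exact congrArg Prod.fst he
    · rintro ⟨e₁, g₁⟩ h₁ ⟨e₂, g₂⟩ h₂ he
      simp only [derivedProj] at he
      have h₁' : g₁ * γ e₁ = v.2 := congrArg Prod.snd h₁
      have h₂' : g₂ * γ e₂ = v.2 := congrArg Prod.snd h₂
      subst he
      have : g₁ = g₂ := mul_right_cancel (h₁'.trans h₂'.symm)
      simp [this]; rfl
    · intro e he
      refine ⟨(e, v.2 * (γ e)⁻¹), ?_, rfl⟩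
      show ((derivedGraph Δ γ).τ (e, v.2 * (γ e)⁻¹)) = v
      show (Δ.τ e, v.2 * (γ e)⁻¹ * γ e) = v
      rw [show Δ.τ e = v.1 from he, inv_mul_cancel_right]
      exact Prod.mk.eta

theorem derived_endOf_snd {Δ : MGraph} {G : Type} [Group G] (γ : Δ.E → G) :
    ∀ (l : List ((derivedGraph Δ γ).E × Bool)) (v : (derivedGraph Δ γ).V),
      chain (derivedGraph Δ γ) v l →
      (endOf (derivedGraph Δ γ) v l).2
        = v.2 * (l.map (fun s => cond s.2 (γ s.1.1) (γ s.1.1)⁻¹)).prod := by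
  intro l
  induction l with
  | nil => intro v _; simp [endOf]
  | cons s rest ih =>
    intro v hc
    obtain ⟨⟨e, g⟩, b⟩ := s
    have h1 := hc.1
    have step : endOf (derivedGraph Δ γ) v (((e, g), b) :: rest)
        = endOf (derivedGraph Δ γ) (stepTgt (derivedGraph Δ γ) ((e, g), b)) rest := rfl
    rw [step, ih _ hc.2]
    cases b with
    | true =>
      have hg : v.2 = g := (congrArg Prod.snd h1).symm
      show g * γ e * _ = _
      simp [hg, mul_assoc]
    | false =>
      have hg : v.2 = g * γ e := (congrArg Prod.snd h1).symm
      show g * _ = _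
      simp [hg, mul_assoc]

theorem map_flip_reverse {Γ Δ : MGraph} (ψ : Hom Γ Δ) (l : List (Γ.E × Bool)) :
    (l.reverse.map flipStep).map ψ.mapStep = (l.map ψ.mapStep).reverse.map flipStep := by
  simp only [List.map_reverse, List.map_map]
  rfl

theorem flip_reverse_involutive {Γ : MGraph} (l : List (Γ.E × Bool)) :
    ((l.reverse.map flipStep).reverse.map flipStep) = l := by
  simp only [List.map_reverse, List.reverse_reverse, List.map_map]
  have : (flipStep ∘ flipStep : Γ.E × Bool → Γ.E × Bool) = id := by
    funext s; simp [flipStep]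
  simp [this]

/-- Key uniqueness lemma: under a good covering, the endpoints of lifts of the
projections of two walks in the derived graph with the same endpoints agree. -/
theorem lift_end_unique {Δ Δtop : MGraph} {G : Type} [Group G] {γ : Δ.E → G}
    {μ : Hom Δtop Δ} (hμ : IsCovering μ) (hgood : IsGoodCovering γ μ)
    {v₀ : (derivedGraph Δ γ).V} {vtop : Δtop.V} (hv : μ.onV vtop = v₀.1)
    {l₁ l₂ : List ((derivedGraph Δ γ).E × Bool)} {m₁ m₂ : List (Δtop.E × Bool)}
    (hl₁ : chain (derivedGraph Δ γ) v₀ l₁) (hl₂ : chain (derivedGraph Δ γ) v₀ l₂)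
    (hend : endOf (derivedGraph Δ γ) v₀ l₁ = endOf (derivedGraph Δ γ) v₀ l₂)
    (hm₁ : chain Δtop vtop m₁) (hm₂ : chain Δtop vtop m₂)
    (hmap₁ : m₁.map μ.mapStep = l₁.map (derivedProj Δ γ).mapStep)
    (hmap₂ : m₂.map μ.mapStep = l₂.map (derivedProj Δ γ).mapStep) :
    endOf Δtop vtop m₁ = endOf Δtop vtop m₂ := by
  have hφV : (derivedProj Δ γ).onV v₀ = v₀.1 := rfl
  -- the cyclic walk l in (derivedGraph Δ γ)
  set l : List ((derivedGraph Δ γ).E × Bool) := l₁ ++ l₂.reverse.map flipStep with hldef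
  have hlchain : chain (derivedGraph Δ γ) v₀ l := by
    refine chain_append (derivedGraph Δ γ) _ _ _ hl₁ ?_
    rw [hend]
    exact chain_reverse (derivedGraph Δ γ) l₂ v₀ hl₂
  have hlend : endOf (derivedGraph Δ γ) v₀ l = v₀ := by
    rw [hldef, endOf_append, hend, endOf_reverse (derivedGraph Δ γ) l₂ v₀ hl₂]
  -- its projection p, a cyclic walk of trivial voltage
  set W : Walk (derivedGraph Δ γ) := ⟨v₀, l, hlchain⟩ with hW
  set p : Walk Δ := Walk.map (derivedProj Δ γ) W with hp
  have hpfirst : p.first = v₀.1 := rfl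
  have hpcyc : p.IsCyclic := by
    show endOf Δ ((derivedProj Δ γ).onV v₀) (l.map (derivedProj Δ γ).mapStep) = (derivedProj Δ γ).onV v₀
    rw [endOf_map, hlend]
  have hvolt : voltage γ p = 1 := by
    have h2 := derived_endOf_snd γ l v₀ hlchain
    rw [hlend] at h2
    have : (l.map fun s => cond s.2 (γ s.1.1) (γ s.1.1)⁻¹).prod = 1 :=
      mul_left_cancel (a := v₀.2) (by rw [mul_one]; exact h2.symm)
    show ((l.map (derivedProj Δ γ).mapStep).map fun s => cond s.2 (γ s.1) (γ s.1)⁻¹).prod = 1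
    rw [List.map_map]
    exact this
  -- lift the second leg starting from the end of m₁
  set w₁ : Δtop.V := endOf Δtop vtop m₁ with hw₁
  have hμw₁ : μ.onV w₁ = (derivedProj Δ γ).onV (endOf (derivedGraph Δ γ) v₀ l₂) := by
    have := endOf_map μ m₁ vtop
    rw [hmap₁, hv, ← hφV, endOf_map (derivedProj Δ γ) l₁ v₀, hend] at this
    exact this.symm
  have hc2 : chain Δ (μ.onV w₁) ((l₂.map (derivedProj Δ γ).mapStep).reverse.map flipStep) := by
    have := chain_reverse Δ (l₂.map (derivedProj Δ γ).mapStep) ((derivedProj Δ γ).onV v₀) ((derivedProj Δ γ).chain_map l₂ v₀ hl₂)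
    rw [endOf_map (derivedProj Δ γ) l₂ v₀] at this
    rw [hμw₁]
    exact this
  obtain ⟨m₂', hm₂'c, hm2pmap⟩ := list_lift_exists hμ _ w₁ hc2
  -- the concatenated lift Q of p
  have hQchain : chain Δtop vtop (m₁ ++ m₂') := chain_append Δtop _ _ _ hm₁ hm₂'c
  set Q : Walk Δtop := ⟨vtop, m₁ ++ m₂', hQchain⟩ with hQ
  have hQmap : Walk.map μ Q = p := by
    refine Walk.ext'' ?_ ?_
    · show μ.onV vtop = (derivedProj Δ γ).onV v₀
      rw [hv, hφV]
    · show (m₁ ++ m₂').map μ.mapStep = l.map (derivedProj Δ γ).mapStep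
      rw [List.map_append, hmap₁, hm2pmap, hldef, List.map_append, map_flip_reverse]
  have hQcyc : Q.IsCyclic := hgood p hpcyc hvolt Q hQmap
  have hQend : endOf Δtop w₁ m₂' = vtop := by
    have : endOf Δtop vtop (m₁ ++ m₂') = vtop := hQcyc
    rwa [endOf_append, ← hw₁] at this
  -- reverse the lifted second leg: a lift of (derivedProj Δ γ)(l₂) from vtop ending at w₁
  set m₂'' : List (Δtop.E × Bool) := m₂'.reverse.map flipStep with hm₂''
  have hm₂''c : chain Δtop vtop m₂'' := by
    have := chain_reverse Δtop m₂' w₁ hm₂'c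
    rwa [hQend] at this
  have hm₂''end : endOf Δtop vtop m₂'' = w₁ := by
    have := endOf_reverse Δtop m₂' w₁ hm₂'c
    rwa [hQend] at this
  have hm₂''map : m₂''.map μ.mapStep = l₂.map (derivedProj Δ γ).mapStep := by
    rw [hm₂'', map_flip_reverse, hm2pmap, flip_reverse_involutive]
  have : m₂ = m₂'' := list_lift_unique hμ m₂ m₂'' vtop hm₂ hm₂''c (hmap₂.trans hm₂''map.symm)
  rw [this, hm₂''end]

theorem map_ext' {α β : Type _} {f g : α → β} (h : ∀ a, f a = g a) (l : List α) :
    l.map f = l.map g := by rw [funext h]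

/-- The path-lifting relation from the derived graph to the cover. -/
def LiftRel {Δ Δtop : MGraph} {G : Type} [Group G] (γ : Δ.E → G) (μ : Hom Δtop Δ)
    (v₀ : (derivedGraph Δ γ).V) (vtop : Δtop.V)
    (v : (derivedGraph Δ γ).V) (w : Δtop.V) : Prop :=
  ∃ l m, chain (derivedGraph Δ γ) v₀ l ∧ endOf (derivedGraph Δ γ) v₀ l = v ∧
    chain Δtop vtop m ∧ List.map μ.mapStep m = List.map (derivedProj Δ γ).mapStep l ∧
    endOf Δtop vtop m = w

theorem liftRel_total {Δ Δtop : MGraph} {G : Type} [Group G] {γ : Δ.E → G}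
    (hΓconn : Connected (derivedGraph Δ γ)) {μ : Hom Δtop Δ} (hμ : IsCovering μ)
    {v₀ : (derivedGraph Δ γ).V} {vtop : Δtop.V} (hv : μ.onV vtop = v₀.1)
    (v : (derivedGraph Δ γ).V) : ∃ w, LiftRel γ μ v₀ vtop v w := by
  obtain ⟨q, hq1, hq2⟩ := hΓconn v₀ v
  have hlc : chain (derivedGraph Δ γ) v₀ q.steps := by rw [← hq1]; exact q.ok
  have hc : chain Δ (μ.onV vtop) (q.steps.map (derivedProj Δ γ).mapStep) := by
    rw [hv]
    exact (derivedProj Δ γ).chain_map q.steps v₀ hlc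
  obtain ⟨m, hm1, hm2⟩ := list_lift_exists hμ _ vtop hc
  exact ⟨endOf Δtop vtop m, q.steps, m, hlc, by rw [← hq1]; exact hq2, hm1, hm2, rfl⟩

theorem liftRel_func {Δ Δtop : MGraph} {G : Type} [Group G] {γ : Δ.E → G}
    {μ : Hom Δtop Δ} (hμ : IsCovering μ) (hgood : IsGoodCovering γ μ)
    {v₀ : (derivedGraph Δ γ).V} {vtop : Δtop.V} (hv : μ.onV vtop = v₀.1)
    {v : (derivedGraph Δ γ).V} {w w' : Δtop.V}
    (h : LiftRel γ μ v₀ vtop v w) (h' : LiftRel γ μ v₀ vtop v w') : w = w' := by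
  obtain ⟨l₁, m₁, hl₁, he₁, hm₁, hmap₁, rfl⟩ := h
  obtain ⟨l₂, m₂, hl₂, he₂, hm₂, hmap₂, rfl⟩ := h'
  exact lift_end_unique hμ hgood hv hl₁ hl₂ (he₁.trans he₂.symm) hm₁ hm₂ hmap₁ hmap₂

theorem liftRel_proj {Δ Δtop : MGraph} {G : Type} [Group G] {γ : Δ.E → G}
    {μ : Hom Δtop Δ} {v₀ : (derivedGraph Δ γ).V} {vtop : Δtop.V}
    (hv : μ.onV vtop = v₀.1) {v : (derivedGraph Δ γ).V} {w : Δtop.V}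
    (h : LiftRel γ μ v₀ vtop v w) : μ.onV w = v.1 := by
  obtain ⟨l, m, hl, he, hm, hmap, rfl⟩ := h
  have h1 := endOf_map μ m vtop
  rw [hmap, hv] at h1
  have h2 := endOf_map (derivedProj Δ γ) l v₀
  exact h1.symm.trans (h2.trans (by rw [he]; rfl))

theorem liftRel_step {Δ Δtop : MGraph} {G : Type} [Group G] {γ : Δ.E → G}
    {μ : Hom Δtop Δ} {v₀ : (derivedGraph Δ γ).V} {vtop : Δtop.V}
    {v : (derivedGraph Δ γ).V} {w : Δtop.V} (h : LiftRel γ μ v₀ vtop v w)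
    {s : (derivedGraph Δ γ).E × Bool} {t : Δtop.E × Bool}
    (hs : stepSrc (derivedGraph Δ γ) s = v) (ht : stepSrc Δtop t = w)
    (hmapst : μ.mapStep t = (derivedProj Δ γ).mapStep s) :
    LiftRel γ μ v₀ vtop (stepTgt (derivedGraph Δ γ) s) (stepTgt Δtop t) := by
  obtain ⟨l, m, hl, he, hm, hmap, hw⟩ := h
  refine ⟨l ++ [s], m ++ [t], ?_, ?_, ?_, ?_, ?_⟩
  · exact chain_append _ _ _ _ hl (by rw [he]; exact ⟨hs, trivial⟩)
  · rw [endOf_append, he]; rfl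
  · exact chain_append _ _ _ _ hm (by rw [hw]; exact ⟨ht, trivial⟩)
  · simp only [List.map_append, List.map_cons, List.map_nil, hmap, hmapst]
  · rw [endOf_append, hw]; rfl

/-- The forward construction: a good covering yields the factoring covering `ν`. -/
theorem good_gives_nu {Δ Δtop : MGraph} {G : Type} [Group G]
    (γ : Δ.E → G) (hΓconn : Connected (derivedGraph Δ γ))
    (μ : Hom Δtop Δ) (hμ : IsCovering μ) (htop : Connected Δtop)
    (v₀ : (derivedGraph Δ γ).V) (vtop : Δtop.V) (hv : μ.onV vtop = v₀.1)
    (hgood : IsGoodCovering γ μ) :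
    ∃ ν : Hom (derivedGraph Δ γ) Δtop,
      IsCovering ν ∧ μ.comp ν = derivedProj Δ γ ∧ ν.onV v₀ = vtop := by
  classical
  choose νV hνV using liftRel_total hΓconn hμ hv
  have hfunc := fun {v w w'} h h' => liftRel_func hμ hgood hv (v := v) (w := w) (w' := w') h h'
  have hproj : ∀ v, μ.onV (νV v) = v.1 := fun v => liftRel_proj hv (hνV v)
  -- construct the edge map
  have edge_ex : ∀ ε : (derivedGraph Δ γ).E, ∃ e' : Δtop.E,
      Δtop.ι e' = νV ((derivedGraph Δ γ).ι ε) ∧ μ.onE e' = ε.1 := by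
    intro ε
    have hmem : ε.1 ∈ Out Δ (μ.onV (νV ((derivedGraph Δ γ).ι ε))) := by
      show Δ.ι ε.1 = _
      rw [hproj]
      rfl
    obtain ⟨e', he', heq⟩ := (hμ.bijOut _).surjOn hmem
    exact ⟨e', he', heq⟩
  choose νE hνE1 hνE2 using edge_ex
  have hmapτ : ∀ ε, Δtop.τ (νE ε) = νV ((derivedGraph Δ γ).τ ε) := by
    intro ε
    have hstep := liftRel_step (hνV ((derivedGraph Δ γ).ι ε))
      (s := (ε, true)) (t := (νE ε, true)) rfl (hνE1 ε)
      (by show (μ.onE (νE ε), true) = (ε.1, true); rw [hνE2])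
    exact hfunc hstep (hνV ((derivedGraph Δ γ).τ ε))
  -- surjectivity on vertices
  have hsurjV : ∀ w : Δtop.V, ∃ v, νV v = w := by
    intro w
    obtain ⟨r, hr1, hr2⟩ := htop vtop w
    have hmch : chain Δtop vtop r.steps := by rw [← hr1]; exact r.ok
    have hc : chain Δ ((derivedProj Δ γ).onV v₀) (r.steps.map μ.mapStep) := by
      have h := μ.chain_map r.steps vtop hmch
      rw [hv] at h
      exact h
    obtain ⟨l, hl1, hl2⟩ := list_lift_exists (derivedProj_isCovering Δ γ) _ v₀ hc
    have hR : LiftRel γ μ v₀ vtop (endOf (derivedGraph Δ γ) v₀ l) w :=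
      ⟨l, r.steps, hl1, rfl, hmch, hl2.symm, by rw [← hr1]; exact hr2⟩
    exact ⟨_, hfunc (hνV _) hR⟩
  -- surjectivity on edges
  have hsurjE : ∀ e' : Δtop.E, ∃ ε, νE ε = e' := by
    intro e'
    obtain ⟨v, hvw⟩ := hsurjV (Δtop.ι e')
    have hv1 : Δ.ι (μ.onE e') = v.1 := by rw [μ.map_ι, ← hvw, hproj]
    refine ⟨(μ.onE e', v.2), ?_⟩
    have hι : (derivedGraph Δ γ).ι (μ.onE e', v.2) = v := by
      show (Δ.ι (μ.onE e'), v.2) = v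
      rw [hv1]; exact Prod.mk.eta
    have h1 : νE (μ.onE e', v.2) ∈ Out Δtop (Δtop.ι e') := by
      show Δtop.ι _ = _
      exact (hνE1 _).trans ((congrArg νV hι).trans hvw)
    have h2 : e' ∈ Out Δtop (Δtop.ι e') := rfl
    exact (hμ.bijOut (Δtop.ι e')).injOn h1 h2 (hνE2 _)
  -- out-bijectivity
  have hbijOut : ∀ v, Set.BijOn νE (Out (derivedGraph Δ γ) v) (Out Δtop (νV v)) := by
    intro v
    refine ⟨?_, ?_, ?_⟩
    · intro ε hε
      show Δtop.ι (νE ε) = νV v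
      rw [hνE1, show (derivedGraph Δ γ).ι ε = v from hε]
    · rintro ⟨e₁, g₁⟩ h₁ ⟨e₂, g₂⟩ h₂ he
      have hE : e₁ = e₂ := by
        have h := congrArg μ.onE he
        exact (hνE2 _).symm.trans (h.trans (hνE2 _))
      have hg₁ : g₁ = v.2 := congrArg Prod.snd h₁
      have hg₂ : g₂ = v.2 := congrArg Prod.snd h₂
      rw [hE, hg₁, hg₂]
    · intro e' he'
      have hv1 : Δ.ι (μ.onE e') = v.1 := by
        rw [μ.map_ι, show Δtop.ι e' = νV v from he', hproj]
      have hι : (derivedGraph Δ γ).ι (μ.onE e', v.2) = v := by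
        show (Δ.ι (μ.onE e'), v.2) = v
        rw [hv1]; exact Prod.mk.eta
      refine ⟨(μ.onE e', v.2), hι, ?_⟩
      have h1 : νE (μ.onE e', v.2) ∈ Out Δtop (νV v) := by
        show Δtop.ι _ = νV v
        exact (hνE1 _).trans (congrArg νV hι)
      exact (hμ.bijOut (νV v)).injOn h1 he' (hνE2 _)
  -- in-bijectivity
  have hbijIn : ∀ v, Set.BijOn νE (In (derivedGraph Δ γ) v) (In Δtop (νV v)) := by
    intro v
    refine ⟨?_, ?_, ?_⟩
    · intro ε hε
      show Δtop.τ (νE ε) = νV v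
      rw [hmapτ, show (derivedGraph Δ γ).τ ε = v from hε]
    · rintro ⟨e₁, g₁⟩ h₁ ⟨e₂, g₂⟩ h₂ he
      have hE : e₁ = e₂ := by
        have h := congrArg μ.onE he
        exact (hνE2 _).symm.trans (h.trans (hνE2 _))
      subst hE
      have hg₁ : g₁ * γ e₁ = v.2 := congrArg Prod.snd h₁
      have hg₂ : g₂ * γ e₁ = v.2 := congrArg Prod.snd h₂
      rw [mul_right_cancel (hg₁.trans hg₂.symm)]
    · intro e' he'
      have hv1 : Δ.τ (μ.onE e') = v.1 := by
        rw [μ.map_τ, show Δtop.τ e' = νV v from he', hproj]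
      have hτ : (derivedGraph Δ γ).τ (μ.onE e', v.2 * (γ (μ.onE e'))⁻¹) = v := by
        show (Δ.τ (μ.onE e'), v.2 * (γ (μ.onE e'))⁻¹ * γ (μ.onE e')) = v
        rw [hv1, inv_mul_cancel_right]; exact Prod.mk.eta
      refine ⟨(μ.onE e', v.2 * (γ (μ.onE e'))⁻¹), hτ, ?_⟩
      have h1 : νE (μ.onE e', v.2 * (γ (μ.onE e'))⁻¹) ∈ In Δtop (νV v) := by
        show Δtop.τ _ = νV v
        exact (hmapτ _).trans (congrArg νV hτ)
      exact (hμ.bijIn (νV v)).injOn h1 he' (hνE2 _)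
  refine ⟨⟨νV, νE, fun ε => hνE1 ε, fun ε => hmapτ ε⟩, ⟨hsurjV, hsurjE, hbijOut, hbijIn⟩, ?_, ?_⟩
  · exact Hom.ext'' (funext fun v => hproj v) (funext fun ε => hνE2 ε)
  · exact hfunc (hνV v₀) ⟨[], [], trivial, rfl, trivial, rfl, rfl⟩

/-- Let `(Δ, γ)` be a voltage graph with connected derived graph
`Γ = Δ ×_γ G`, `φ : Γ → Δ` the canonical covering, `v₀` a base vertex of `Γ` with
`φ(v₀) = v_Δ`, and `μ : Δ_⊤ → Δ` a covering with `Δ_⊤` connected and `μ(v_⊤) = v_Δ`.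
Then the path-lifting map `ν : Γ → Δ_⊤` is well defined and a covering with
`μ ∘ ν = φ` and `ν(v₀) = v_⊤` if and only if `μ` is a good covering of `(Δ, γ)`. -/
theorem exists_factoring_covering_iff_good {Δ Δtop : MGraph} {G : Type} [Group G]
    (γ : Δ.E → G) (hΓconn : Connected (derivedGraph Δ γ))
    (μ : Hom Δtop Δ) (hμ : IsCovering μ) (htop : Connected Δtop)
    (v₀ : (derivedGraph Δ γ).V) (vtop : Δtop.V) (hv : μ.onV vtop = v₀.1) :
    (∃ ν : Hom (derivedGraph Δ γ) Δtop,
      IsCovering ν ∧ μ.comp ν = derivedProj Δ γ ∧ ν.onV v₀ = vtop) ↔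
    IsGoodCovering γ μ := by
  constructor
  · rintro ⟨ν, hνcov, hcomp, -⟩
    intro p hpcyc hpvolt q hq
    have hcompV : ∀ x, μ.onV (ν.onV x) = x.1 := fun x => congrFun (congrArg Hom.onV hcomp) x
    have hcompE : ∀ ε, μ.onE (ν.onE ε) = ε.1 := fun ε => congrFun (congrArg Hom.onE hcomp) ε
    obtain ⟨u, hu⟩ := hνcov.surjV q.first
    have hu1 : u.1 = p.first := by
      rw [← hcompV u, hu, show μ.onV q.first = (Walk.map μ q).first from rfl, hq]
    -- lift p to the derived graph starting at u
    have hc : chain Δ ((derivedProj Δ γ).onV u) p.steps := by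
      show chain Δ u.1 p.steps
      rw [hu1]; exact p.ok
    obtain ⟨l, hlc, hlmap⟩ := list_lift_exists (derivedProj_isCovering Δ γ) p.steps u hc
    -- the lift is cyclic
    have hend : endOf (derivedGraph Δ γ) u l = u := by
      have h1 : (endOf (derivedGraph Δ γ) u l).1 = u.1 := by
        have := endOf_map (derivedProj Δ γ) l u
        rw [hlmap] at this
        have h2 : endOf Δ ((derivedProj Δ γ).onV u) p.steps = p.first := by
          show endOf Δ u.1 p.steps = p.first
          rw [hu1]
          exact hpcyc
        rw [← hu1] at h2
        exact this.symm.trans h2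
      have h2 : (endOf (derivedGraph Δ γ) u l).2 = u.2 := by
        rw [derived_endOf_snd γ l u hlc]
        have : (l.map fun s => cond s.2 (γ s.1.1) (γ s.1.1)⁻¹).prod = 1 := by
          have hh : ((l.map (derivedProj Δ γ).mapStep).map
              fun s => cond s.2 (γ s.1) (γ s.1)⁻¹).prod = 1 := by
            rw [hlmap]; exact hpvolt
          rwa [List.map_map] at hh
        rw [this, mul_one]
      exact Prod.ext h1 h2
    -- its ν-image is a lift of p starting at q.first
    have hmch : chain Δtop q.first (l.map ν.mapStep) := by
      rw [← hu]; exact ν.chain_map l u hlc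
    have hmmap : (l.map ν.mapStep).map μ.mapStep = p.steps := by
      rw [List.map_map, ← hlmap]
      exact map_ext' (fun s => by
        show (μ.onE (ν.onE s.1), s.2) = (s.1.1, s.2)
        rw [hcompE]) l
    -- uniqueness of lifts: q.steps = l.map ν.mapStep
    have hqch : chain Δtop q.first q.steps := q.ok
    have hqmap : q.steps.map μ.mapStep = p.steps := congrArg Walk.steps hq
    have hsteps : q.steps = l.map ν.mapStep :=
      list_lift_unique hμ q.steps (l.map ν.mapStep) q.first hqch hmch
        (hqmap.trans hmmap.symm)
    show endOf Δtop q.first q.steps = q.first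
    rw [hsteps, ← hu, endOf_map ν l u, hend]
  · intro hgood
    exact good_gives_nu γ hΓconn μ hμ htop v₀ vtop hv hgood

end VG
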